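/- arXiv:1705.07541 — 5 statements merged into one kernel-verified Lean document; each statement's English description precedes it below -/
import Mathlib

section
/- Suppose a complementary loss L̄ satisfies Σ_{ȳ=1}^K L̄(f(x),ȳ) = M₁ for all x (a constant). Then for any joint distribution p over (x,y) with complementary distribution p̄(x,ȳ) = (1/(K−1)) Σ_{y≠ȳ} p(x,y), (K−1)·E_{p̄}[L̄(f(x),ȳ)] = M₁ − E_p[L̄(f(x),y)]. -/
open MeasureTheory Finset

/-- If the complementary loss sums to a constant `M₁` over all labels, then
`(K−1)·E_{p̄}[L̄(f(x),ȳ)] = M₁ − E_p[L̄(f(x),y)]`.  Distributions are represented by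
densities `p x y` with respect to a base measure `ν` on `X`, and
`p̄(x,ȳ) = (1/(K−1)) Σ_{y≠ȳ} p(x,y)`. -/
theorem complementary_expectation_identity
    {X Y : Type*} [MeasurableSpace X] (ν : Measure X)
    (K : ℕ) (hK : 2 ≤ K)
    (f : X → Y) (Lbar : Y → Fin K → ℝ) (M₁ : ℝ)
    (p : X → Fin K → ℝ)
    (hp : ∀ x y, 0 ≤ p x y)
    (hprob : ∑ y : Fin K, ∫ x, p x y ∂ν = 1)
    (hint : ∀ yb y : Fin K, Integrable (fun x => Lbar (f x) yb * p x y) ν)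
    (hM₁ : ∀ x, ∑ yb : Fin K, Lbar (f x) yb = M₁) :
    ((K : ℝ) - 1) *
        ∑ yb : Fin K, ∫ x,
          Lbar (f x) yb *
            ((1 / ((K : ℝ) - 1)) * ∑ y ∈ Finset.univ.filter (fun y => y ≠ yb), p x y) ∂ν
      = M₁ - ∑ y : Fin K, ∫ x, Lbar (f x) y * p x y ∂ν := by
  have hKne : ((K : ℝ) - 1) ≠ 0 := by
    have : (2 : ℝ) ≤ (K : ℝ) := by exact_mod_cast hK
    linarith
  have key : ∀ yb : Fin K,
      ((K : ℝ) - 1) *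
          (∫ x, Lbar (f x) yb *
            ((1 / ((K : ℝ) - 1)) * ∑ y ∈ Finset.univ.filter (fun y => y ≠ yb), p x y) ∂ν)
        = (∑ y : Fin K, ∫ x, Lbar (f x) yb * p x y ∂ν) - ∫ x, Lbar (f x) yb * p x yb ∂ν := by
    intro yb
    rw [← integral_const_mul]
    have heq : (fun x => ((K : ℝ) - 1) * (Lbar (f x) yb *
          ((1 / ((K : ℝ) - 1)) * ∑ y ∈ Finset.univ.filter (fun y => y ≠ yb), p x y)))
        = fun x => (∑ y : Fin K, Lbar (f x) yb * p x y) - Lbar (f x) yb * p x yb := by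
      funext x
      rw [Finset.filter_ne', Finset.sum_erase_eq_sub (Finset.mem_univ yb), ← Finset.mul_sum]
      field_simp
    rw [heq, integral_sub (integrable_finset_sum _ (fun y _ => hint yb y)) (hint yb yb),
      integral_finset_sum _ (fun y _ => hint yb y)]
  rw [Finset.mul_sum]
  rw [Finset.sum_congr rfl (fun yb _ => key yb), Finset.sum_sub_distrib]
  have hC : (∑ yb : Fin K, ∑ y : Fin K, ∫ x, Lbar (f x) yb * p x y ∂ν) = M₁ := by
    rw [Finset.sum_comm]
    have h1 : ∀ y : Fin K,
        (∑ yb : Fin K, ∫ x, Lbar (f x) yb * p x y ∂ν) = M₁ * ∫ x, p x y ∂ν := by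
      intro y
      rw [← integral_finset_sum _ (fun yb _ => hint yb y), ← integral_const_mul]
      congr 1; funext x
      rw [← Finset.sum_mul, hM₁]
    simp only [h1, ← Finset.mul_sum, hprob, mul_one]
  rw [hC]
end

section
/- Let L and L̄ be losses such that Σ_{ȳ=1}^K L̄(f(x),ȳ) = M₁ and L̄(f(x),y) + L(f(x),y) = M₂ for all x and y, for constants M₁, M₂ ≥ 0. Then the classification risk satisfies R(f) := E_{p(x,y)}[L(f(x),y)] = (K−1)·E_{p̄(x,ȳ)}[L̄(f(x),ȳ)] − M₁ + M₂, where p̄(x,ȳ) = (1/(K−1)) Σ_{y≠ȳ} p(x,y). -/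
open MeasureTheory Finset

/-- Theorem 1 of "Learning from Complementary Labels": under the two symmetry conditions,
the classification risk satisfies
`R(f) = (K−1)·E_{p̄}[L̄(f(x),ȳ)] − M₁ + M₂`, where
`p̄(x,ȳ) = (1/(K−1)) Σ_{y≠ȳ} p(x,y)`. -/
theorem risk_from_complementary_labels
    {X Y : Type*} [MeasurableSpace X] (ν : Measure X)
    (K : ℕ) (hK : 2 ≤ K)
    (f : X → Y) (L Lbar : Y → Fin K → ℝ) (M₁ M₂ : ℝ)
    (hM₁0 : 0 ≤ M₁) (hM₂0 : 0 ≤ M₂)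
    (p : X → Fin K → ℝ)
    (hp : ∀ x y, 0 ≤ p x y)
    (hprob : ∑ y : Fin K, ∫ x, p x y ∂ν = 1)
    (hintL : ∀ y : Fin K, Integrable (fun x => L (f x) y * p x y) ν)
    (hintLbar : ∀ yb y : Fin K, Integrable (fun x => Lbar (f x) yb * p x y) ν)
    (hM₁ : ∀ x, ∑ yb : Fin K, Lbar (f x) yb = M₁)
    (hM₂ : ∀ x (y : Fin K), Lbar (f x) y + L (f x) y = M₂) :
    ∑ y : Fin K, ∫ x, L (f x) y * p x y ∂ν
      = ((K : ℝ) - 1) *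
          (∑ yb : Fin K, ∫ x,
            Lbar (f x) yb *
              ((1 / ((K : ℝ) - 1)) * ∑ y ∈ Finset.univ.filter (fun y => y ≠ yb), p x y) ∂ν)
        - M₁ + M₂ := by
  set c : ℝ := (K : ℝ) - 1 with hc
  have hcpos : (0 : ℝ) < c := by
    have : (2 : ℝ) ≤ (K : ℝ) := by exact_mod_cast hK
    simp only [hc]; linarith
  have hc0 : c ≠ 0 := ne_of_gt hcpos
  set I : Fin K → Fin K → ℝ := fun yb y => ∫ x, Lbar (f x) yb * p x y ∂ν with hI
  set P : Fin K → ℝ := fun y => ∫ x, p x y ∂ν with hP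
  -- Lemma A : LHS term
  have hA : ∀ y : Fin K, (∫ x, L (f x) y * p x y ∂ν) = M₂ * P y - I y y := by
    intro y
    have heq : (fun x => L (f x) y * p x y)
        = fun x => M₂ * p x y - Lbar (f x) y * p x y := by
      funext x
      linear_combination (p x y) * (hM₂ x y)
    have hintM : Integrable (fun x => M₂ * p x y) ν := by
      have : (fun x => M₂ * p x y)
          = fun x => Lbar (f x) y * p x y + L (f x) y * p x y := by
        funext x
        linear_combination (-(p x y)) * (hM₂ x y)
      rw [this]
      exact (hintLbar y y).add (hintL y)
    rw [heq, integral_sub hintM (hintLbar y y), integral_const_mul]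
  -- Lemma B : column sums
  have hB : ∀ y : Fin K, ∑ yb : Fin K, I yb y = M₁ * P y := by
    intro y
    simp only [hI]
    rw [← integral_finset_sum _ (fun yb _ => hintLbar yb y)]
    have : (fun x => ∑ yb : Fin K, Lbar (f x) yb * p x y)
        = fun x => M₁ * p x y := by
      funext x
      rw [← Finset.sum_mul, hM₁ x]
    rw [this, integral_const_mul]
  -- Lemma C : RHS inner integrals
  have hC : ∀ yb : Fin K,
      (∫ x, Lbar (f x) yb *
        ((1 / c) * ∑ y ∈ Finset.univ.filter (fun y => y ≠ yb), p x y) ∂ν)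
      = (1 / c) * ∑ y ∈ Finset.univ.filter (fun y => y ≠ yb), I yb y := by
    intro yb
    have heq : (fun x => Lbar (f x) yb *
        ((1 / c) * ∑ y ∈ Finset.univ.filter (fun y => y ≠ yb), p x y))
        = fun x => ∑ y ∈ Finset.univ.filter (fun y => y ≠ yb),
            (1 / c) * (Lbar (f x) yb * p x y) := by
      funext x
      simp only [Finset.mul_sum]
      exact Finset.sum_congr rfl fun y _ => by ring
    rw [heq, integral_finset_sum _ (fun y _ => ((hintLbar yb y).const_mul (1 / c)))]
    rw [Finset.mul_sum]
    exact Finset.sum_congr rfl fun y _ => by rw [integral_const_mul]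
  -- rewrite both sides
  have hRHSsum : ∑ yb : Fin K, (∫ x, Lbar (f x) yb *
        ((1 / c) * ∑ y ∈ Finset.univ.filter (fun y => y ≠ yb), p x y) ∂ν)
      = (1 / c) * ∑ yb : Fin K, ∑ y ∈ Finset.univ.filter (fun y => y ≠ yb), I yb y := by
    rw [Finset.mul_sum]
    exact Finset.sum_congr rfl fun yb _ => hC yb
  have hfilter : ∀ yb : Fin K,
      ∑ y ∈ Finset.univ.filter (fun y => y ≠ yb), I yb y
        = (∑ y : Fin K, I yb y) - I yb yb := by
    intro yb
    rw [Finset.filter_ne', Finset.sum_erase_eq_sub (Finset.mem_univ yb)]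
  have hdouble : ∑ yb : Fin K, ∑ y ∈ Finset.univ.filter (fun y => y ≠ yb), I yb y
      = M₁ - ∑ y : Fin K, I y y := by
    calc ∑ yb : Fin K, ∑ y ∈ Finset.univ.filter (fun y => y ≠ yb), I yb y
        = ∑ yb : Fin K, ((∑ y : Fin K, I yb y) - I yb yb) :=
          Finset.sum_congr rfl fun yb _ => hfilter yb
      _ = (∑ yb : Fin K, ∑ y : Fin K, I yb y) - ∑ yb : Fin K, I yb yb := by
          rw [Finset.sum_sub_distrib]
      _ = (∑ y : Fin K, ∑ yb : Fin K, I yb y) - ∑ y : Fin K, I y y := by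
          rw [Finset.sum_comm]
      _ = (∑ y : Fin K, M₁ * P y) - ∑ y : Fin K, I y y := by
          rw [Finset.sum_congr rfl fun y _ => hB y]
      _ = M₁ - ∑ y : Fin K, I y y := by
          rw [← Finset.mul_sum, ← hP]
          simp only [hP]
          rw [hprob, mul_one]
  calc ∑ y : Fin K, ∫ x, L (f x) y * p x y ∂ν
      = ∑ y : Fin K, (M₂ * P y - I y y) :=
        Finset.sum_congr rfl fun y _ => hA y
    _ = M₂ - ∑ y : Fin K, I y y := by
        rw [Finset.sum_sub_distrib, ← Finset.mul_sum]
        simp only [hP]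
        rw [hprob, mul_one]
    _ = c * ((1 / c) * (M₁ - ∑ y : Fin K, I y y)) - M₁ + M₂ := by
        field_simp
        ring
    _ = _ := by rw [hRHSsum, hdouble]
end

section
/- Let ℓ satisfy ℓ(z)+ℓ(−z)=1. Then for the one-versus-all losses L_OVA and L̄_OVA (with K classes), the combined symmetric conditions of Theorem 1 hold with M₁ = K and M₂ = 2, and hence E_{p(x,y)}[L_OVA(f(x),y)] = (K−1)·E_{p̄(x,ȳ)}[L̄_OVA(f(x),ȳ)] − K + 2 for any joint distribution p and its complementary distribution p̄. -/
open MeasureTheory Finset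

/-- For a symmetric binary loss, the OVA risk equals `(K−1)` times the complementary OVA risk
minus `K` plus `2`. -/
theorem OVA_risk_from_complementary_labels
    {X : Type*} [MeasurableSpace X] (ν : Measure X)
    (K : ℕ) (hK : 2 ≤ K)
    (ℓ : ℝ → ℝ) (hsym : ∀ z : ℝ, ℓ z + ℓ (-z) = 1)
    (g : Fin K → X → ℝ)
    (p : X → Fin K → ℝ)
    (hp : ∀ x y, 0 ≤ p x y)
    (hprob : ∑ y : Fin K, ∫ x, p x y ∂ν = 1)
    (hintL : ∀ y : Fin K, Integrable (fun x =>
      (ℓ (g y x) + (1 / ((K : ℝ) - 1)) *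
        ∑ y' ∈ Finset.univ.filter (fun y' => y' ≠ y), ℓ (-(g y' x))) * p x y) ν)
    (hintLbar : ∀ yb y : Fin K, Integrable (fun x =>
      ((1 / ((K : ℝ) - 1)) * ∑ y' ∈ Finset.univ.filter (fun y' => y' ≠ yb), ℓ (g y' x)
        + ℓ (-(g yb x))) * p x y) ν) :
    ∑ y : Fin K, ∫ x,
        (ℓ (g y x) + (1 / ((K : ℝ) - 1)) *
          ∑ y' ∈ Finset.univ.filter (fun y' => y' ≠ y), ℓ (-(g y' x))) * p x y ∂ν
      = ((K : ℝ) - 1) *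
          (∑ yb : Fin K, ∫ x,
            ((1 / ((K : ℝ) - 1)) * ∑ y' ∈ Finset.univ.filter (fun y' => y' ≠ yb), ℓ (g y' x)
              + ℓ (-(g yb x))) *
              ((1 / ((K : ℝ) - 1)) * ∑ y ∈ Finset.univ.filter (fun y => y ≠ yb), p x y) ∂ν)
        - K + 2 := by
  have hK1 : 1 ≤ K := le_trans one_le_two hK
  have hKR : (2:ℝ) ≤ (K:ℝ) := by exact_mod_cast hK
  set c : ℝ := (K:ℝ) - 1 with hc
  have hc0 : c ≠ 0 := by simp only [hc]; linarith
  have hfil : ∀ z : Fin K, Finset.univ.filter (fun w => w ≠ z) = Finset.univ.erase z := by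
    intro z; ext w
    simp [Finset.mem_filter, Finset.mem_erase, and_comm]
  have hcard : ∀ z : Fin K, ((Finset.univ.erase z).card : ℝ) = c := by
    intro z
    rw [Finset.card_erase_of_mem (Finset.mem_univ z), Finset.card_univ, Fintype.card_fin,
      Nat.cast_sub hK1]
    simp [hc]
  have hneg : ∀ z : ℝ, ℓ (-z) = 1 - ℓ z := fun z => by linarith [hsym z]
  -- abbreviations
  set Lf : Fin K → X → ℝ := fun y x =>
    ℓ (g y x) + (1/c) * ∑ y' ∈ Finset.univ.filter (fun y' => y' ≠ y), ℓ (-(g y' x)) with hLf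
  set Lb : Fin K → X → ℝ := fun yb x =>
    (1/c) * ∑ y' ∈ Finset.univ.filter (fun y' => y' ≠ yb), ℓ (g y' x) + ℓ (-(g yb x)) with hLb
  -- key pointwise identity
  have key : ∀ (y : Fin K) (x : X),
      ∑ yb ∈ Finset.univ.filter (fun yb => yb ≠ y), Lb yb x
        = Lf y x + ((K:ℝ) - 2) := by
    intro y x
    simp only [hLb, hLf, hfil]
    set S := ∑ y' : Fin K, ℓ (g y' x) with hSdef
    have hsub : ∀ z : Fin K, ∑ y' ∈ Finset.univ.erase z, ℓ (g y' x) = S - ℓ (g z x) :=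
      fun z => by rw [Finset.sum_erase_eq_sub (Finset.mem_univ z)]
    have h1 : ∑ yb ∈ Finset.univ.erase y,
        ((1/c) * ∑ y' ∈ Finset.univ.erase yb, ℓ (g y' x) + ℓ (-(g yb x)))
        = ∑ yb ∈ Finset.univ.erase y, (((1/c) * S + 1) - ((1/c) + 1) * ℓ (g yb x)) := by
      refine Finset.sum_congr rfl fun yb _ => ?_
      rw [hsub yb, hneg]; ring
    have h2 : ∑ y' ∈ Finset.univ.erase y, ℓ (-(g y' x)) = c - (S - ℓ (g y x)) := by
      have h3 : ∑ y' ∈ Finset.univ.erase y, ℓ (-(g y' x))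
          = ∑ y' ∈ Finset.univ.erase y, (1 - ℓ (g y' x)) :=
        Finset.sum_congr rfl fun y' _ => hneg _
      rw [h3, Finset.sum_sub_distrib, Finset.sum_const, hsub y, nsmul_eq_mul, mul_one, hcard y]
    rw [h1, Finset.sum_sub_distrib, Finset.sum_const, ← Finset.mul_sum, hsub y, h2,
      nsmul_eq_mul, hcard y]
    have hKc : (K:ℝ) = c + 1 := by simp [hc]
    rw [hKc]
    field_simp
    ring
  -- rewrite each integral on the RHS
  have step1 : ∀ yb : Fin K,
      ∫ x, Lb yb x * ((1/c) * ∑ y ∈ Finset.univ.filter (fun y => y ≠ yb), p x y) ∂ν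
        = (1/c) * ∑ y ∈ Finset.univ.filter (fun y => y ≠ yb), ∫ x, Lb yb x * p x y ∂ν := by
    intro yb
    have heq : (fun x => Lb yb x * ((1/c) * ∑ y ∈ Finset.univ.filter (fun y => y ≠ yb), p x y))
        = fun x => (1/c) * ∑ y ∈ Finset.univ.filter (fun y => y ≠ yb), Lb yb x * p x y := by
      funext x
      simp only [Finset.mul_sum]
      exact Finset.sum_congr rfl fun y _ => by ring
    rw [heq, integral_const_mul,
      integral_finset_sum _ (fun y _ => hintLbar yb y)]
  -- integrability of the combined function
  have hint2 : ∀ y : Fin K, Integrable (fun x => ((K:ℝ) - 2) * p x y) ν := by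
    intro y
    have h2 : Integrable (fun x => ∑ yb ∈ Finset.univ.filter (fun yb => yb ≠ y), Lb yb x * p x y) ν :=
      integrable_finset_sum _ (fun yb _ => hintLbar yb y)
    have heq : (fun x => ∑ yb ∈ Finset.univ.filter (fun yb => yb ≠ y), Lb yb x * p x y)
        = fun x => (Lf y x + ((K:ℝ) - 2)) * p x y := by
      funext x
      rw [← Finset.sum_mul, key y x]
    rw [heq] at h2
    have h3 := h2.sub (hintL y)
    refine h3.congr (Filter.Eventually.of_forall fun x => ?_)
    simp only [Pi.sub_apply, hLf]
    ring
  -- compute each swapped inner sum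
  have inner : ∀ y : Fin K,
      ∑ yb ∈ Finset.univ.filter (fun yb => yb ≠ y), ∫ x, Lb yb x * p x y ∂ν
        = (∫ x, Lf y x * p x y ∂ν) + ((K:ℝ) - 2) * ∫ x, p x y ∂ν := by
    intro y
    rw [← integral_finset_sum _ (fun yb _ => hintLbar yb y)]
    have heq : (fun x => ∑ yb ∈ Finset.univ.filter (fun yb => yb ≠ y), Lb yb x * p x y)
        = fun x => Lf y x * p x y + ((K:ℝ) - 2) * p x y := by
      funext x
      rw [← Finset.sum_mul, key y x]
      ring
    rw [heq, integral_add (hintL y) (hint2 y), integral_const_mul]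
  -- put everything together
  rw [Finset.sum_congr rfl (fun yb _ => step1 yb), ← Finset.mul_sum,
    ← mul_assoc, mul_one_div, div_self hc0, one_mul]
  -- swap the double sum
  have swap : ∑ yb : Fin K, ∑ y ∈ Finset.univ.filter (fun y => y ≠ yb), ∫ x, Lb yb x * p x y ∂ν
      = ∑ y : Fin K, ∑ yb ∈ Finset.univ.filter (fun yb => yb ≠ y), ∫ x, Lb yb x * p x y ∂ν := by
    simp only [Finset.sum_filter]
    rw [Finset.sum_comm]
    refine Finset.sum_congr rfl fun y _ => Finset.sum_congr rfl fun yb _ => ?_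
    simp [eq_comm]
  rw [swap, Finset.sum_congr rfl (fun y _ => inner y), Finset.sum_add_distrib,
    ← Finset.mul_sum, hprob, mul_one]
  ring
end

section
/- Let ℓ satisfy ℓ(z)+ℓ(−z)=1. Then for the pairwise-comparison losses L_PC and L̄_PC with K classes, E_{p(x,y)}[L_PC(f(x),y)] = (K−1)·E_{p̄(x,ȳ)}[L̄_PC(f(x),ȳ)] − K(K−1)/2 + (K−1) for any joint distribution p and its complementary distribution p̄. -/
open MeasureTheory Finset

lemma sum_pairs_swap_aux {n : ℕ} (F : Fin n → Fin n → ℝ) :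
    ∑ b : Fin n, ∑ a ∈ Finset.univ.filter (fun a => a ≠ b), F a b
      = ∑ b : Fin n, ∑ a ∈ Finset.univ.filter (fun a => a ≠ b), F b a := by
  simp only [Finset.sum_filter]
  rw [Finset.sum_comm]
  refine Finset.sum_congr rfl fun b _ => Finset.sum_congr rfl fun a _ => ?_
  by_cases h : a = b
  · simp [h]
  · have h' : ¬ b = a := fun hh => h hh.symm
    simp [h, h']

/-- For a symmetric binary loss, the PC risk equals `(K−1)` times the complementary PC risk
minus `K(K−1)/2` plus `K−1`. -/
theorem PC_risk_from_complementary_labels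
    {X : Type*} [MeasurableSpace X] (ν : Measure X)
    (K : ℕ) (hK : 2 ≤ K)
    (ℓ : ℝ → ℝ) (hsym : ∀ z : ℝ, ℓ z + ℓ (-z) = 1)
    (g : Fin K → X → ℝ)
    (p : X → Fin K → ℝ)
    (hp : ∀ x y, 0 ≤ p x y)
    (hprob : ∑ y : Fin K, ∫ x, p x y ∂ν = 1)
    (hintL : ∀ y : Fin K, Integrable (fun x =>
      (∑ y' ∈ Finset.univ.filter (fun y' => y' ≠ y), ℓ (g y x - g y' x)) * p x y) ν)
    (hintLbar : ∀ yb y : Fin K, Integrable (fun x =>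
      (∑ y' ∈ Finset.univ.filter (fun y' => y' ≠ yb), ℓ (g y' x - g yb x)) * p x y) ν) :
    ∑ y : Fin K, ∫ x,
        (∑ y' ∈ Finset.univ.filter (fun y' => y' ≠ y), ℓ (g y x - g y' x)) * p x y ∂ν
      = ((K : ℝ) - 1) *
          (∑ yb : Fin K, ∫ x,
            (∑ y' ∈ Finset.univ.filter (fun y' => y' ≠ yb), ℓ (g y' x - g yb x)) *
              ((1 / ((K : ℝ) - 1)) * ∑ y ∈ Finset.univ.filter (fun y => y ≠ yb), p x y) ∂ν)
        - (K : ℝ) * ((K : ℝ) - 1) / 2 + ((K : ℝ) - 1) := by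
  have hK1 : (2:ℝ) ≤ (K:ℝ) := by exact_mod_cast hK
  set c : ℝ := (K:ℝ) - 1 with hc
  have hcpos : 0 < c := by simp only [hc]; linarith
  have hcne : c ≠ 0 := ne_of_gt hcpos
  have hcard : ∀ b : Fin K, ((Finset.univ.filter (fun y' : Fin K => y' ≠ b)).card : ℝ) = c := by
    intro b
    have : (Finset.univ.filter (fun y' : Fin K => y' ≠ b)) = Finset.univ.erase b := by
      ext a; simp [Finset.mem_erase, and_comm]
    rw [this, Finset.card_erase_of_mem (Finset.mem_univ b)]
    simp only [Finset.card_univ, Fintype.card_fin]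
    rw [Nat.cast_sub (by omega)]
    simp [hc]
  have hflip : ∀ (x : X) (b : Fin K),
      (∑ y' ∈ Finset.univ.filter (fun y' => y' ≠ b), ℓ (g y' x - g b x))
        = c - (∑ y' ∈ Finset.univ.filter (fun y' => y' ≠ b), ℓ (g b x - g y' x)) := by
    intro x b
    have : ∀ y' : Fin K, ℓ (g y' x - g b x) = 1 - ℓ (g b x - g y' x) := by
      intro y'
      have h := hsym (g y' x - g b x)
      rw [neg_sub] at h; linarith
    rw [Finset.sum_congr rfl (fun y' _ => this y')]
    rw [Finset.sum_sub_distrib, Finset.sum_const, nsmul_eq_mul, mul_one, hcard b]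
  have hpI : ∀ y : Fin K, Integrable (fun x => p x y) ν := by
    intro y
    have h := ((hintL y).add (hintLbar y y)).const_mul c⁻¹
    apply h.congr
    filter_upwards with x
    simp only [Pi.add_apply]
    rw [hflip x y]
    field_simp
    ring
  have hhalf : ∀ x : X,
      (∑ b : Fin K, ∑ y' ∈ Finset.univ.filter (fun y' => y' ≠ b), ℓ (g y' x - g b x))
        = (K:ℝ) * c / 2 := by
    intro x
    set S := ∑ b : Fin K, ∑ y' ∈ Finset.univ.filter (fun y' => y' ≠ b), ℓ (g y' x - g b x) with hS
    have h2 : S + S = (K:ℝ) * c := by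
      nth_rewrite 2 [hS]
      rw [sum_pairs_swap_aux (fun a b => ℓ (g a x - g b x))]
      rw [hS, ← Finset.sum_add_distrib]
      have : ∀ b : Fin K,
          ((∑ y' ∈ Finset.univ.filter (fun y' => y' ≠ b), ℓ (g y' x - g b x))
           + ∑ y' ∈ Finset.univ.filter (fun y' => y' ≠ b), ℓ (g b x - g y' x)) = c := by
        intro b; rw [hflip x b]; ring
      rw [Finset.sum_congr rfl (fun b _ => this b), Finset.sum_const, nsmul_eq_mul]
      simp [Finset.card_univ]
    linear_combination h2 / 2
  set U : Fin K → Fin K → ℝ := fun yb y => ∫ x,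
      (∑ y' ∈ Finset.univ.filter (fun y' => y' ≠ yb), ℓ (g y' x - g yb x)) * p x y ∂ν with hU
  have hrhs : ∀ yb : Fin K,
      (∫ x, (∑ y' ∈ Finset.univ.filter (fun y' => y' ≠ yb), ℓ (g y' x - g yb x)) *
          ((1 / c) * ∑ y ∈ Finset.univ.filter (fun y => y ≠ yb), p x y) ∂ν)
        = (1 / c) * ∑ y ∈ Finset.univ.filter (fun y => y ≠ yb), U yb y := by
    intro yb
    have heq : (fun x => (∑ y' ∈ Finset.univ.filter (fun y' => y' ≠ yb), ℓ (g y' x - g yb x)) *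
          ((1 / c) * ∑ y ∈ Finset.univ.filter (fun y => y ≠ yb), p x y))
        = fun x => (1 / c) * ∑ y ∈ Finset.univ.filter (fun y => y ≠ yb),
            (∑ y' ∈ Finset.univ.filter (fun y' => y' ≠ yb), ℓ (g y' x - g yb x)) * p x y := by
      funext x
      simp only [Finset.mul_sum]
      exact Finset.sum_congr rfl fun y _ => by ring
    rw [heq, integral_const_mul, integral_finset_sum _ (fun y _ => hintLbar yb y)]
  have hcol : ∀ y : Fin K, (∑ yb : Fin K, U yb y) = (K:ℝ) * c / 2 * ∫ x, p x y ∂ν := by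
    intro y
    simp only [hU]
    rw [← integral_finset_sum _ (fun yb _ => hintLbar yb y), ← integral_const_mul]
    congr 1; funext x
    rw [← Finset.sum_mul, hhalf x]
  have hdiag : ∀ yb : Fin K, U yb yb = c * (∫ x, p x yb ∂ν)
      - ∫ x, (∑ y' ∈ Finset.univ.filter (fun y' => y' ≠ yb), ℓ (g yb x - g y' x)) * p x yb ∂ν := by
    intro yb
    simp only [hU]
    have heq : (fun x => (∑ y' ∈ Finset.univ.filter (fun y' => y' ≠ yb), ℓ (g y' x - g yb x)) * p x yb)
        = fun x => c * p x yb
          - (∑ y' ∈ Finset.univ.filter (fun y' => y' ≠ yb), ℓ (g yb x - g y' x)) * p x yb := by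
      funext x; rw [hflip x yb]; ring
    rw [heq, integral_sub (((hpI yb).const_mul c)) (hintL yb), integral_const_mul]
  have hsplit : ∀ yb : Fin K,
      (∑ y ∈ Finset.univ.filter (fun y => y ≠ yb), U yb y) = (∑ y : Fin K, U yb y) - U yb yb := by
    intro yb
    have : (Finset.univ.filter (fun y : Fin K => y ≠ yb)) = Finset.univ.erase yb := by
      ext a; simp [Finset.mem_erase, and_comm]
    rw [this, Finset.sum_erase_eq_sub (Finset.mem_univ yb)]
  calc ∑ y : Fin K, ∫ x,
        (∑ y' ∈ Finset.univ.filter (fun y' => y' ≠ y), ℓ (g y x - g y' x)) * p x y ∂ν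
      = c * ∑ yb : Fin K, ((1 / c) * ∑ y ∈ Finset.univ.filter (fun y => y ≠ yb), U yb y)
        - (K:ℝ) * c / 2 + c := by
        rw [← Finset.mul_sum, ← mul_assoc, mul_one_div, div_self hcne, one_mul]
        have e1 : (∑ yb : Fin K, ∑ y ∈ Finset.univ.filter (fun y => y ≠ yb), U yb y)
            = (∑ yb : Fin K, ∑ y : Fin K, U yb y) - ∑ yb : Fin K, U yb yb := by
          rw [← Finset.sum_sub_distrib]
          exact Finset.sum_congr rfl (fun yb _ => hsplit yb)
        have e2 : (∑ yb : Fin K, ∑ y : Fin K, U yb y) = (K:ℝ) * c / 2 := by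
          rw [Finset.sum_comm]
          rw [Finset.sum_congr rfl (fun y _ => hcol y), ← Finset.mul_sum, hprob, mul_one]
        have e3 : (∑ yb : Fin K, U yb yb) = c
            - ∑ yb : Fin K, ∫ x,
              (∑ y' ∈ Finset.univ.filter (fun y' => y' ≠ yb), ℓ (g yb x - g y' x)) * p x yb ∂ν := by
          rw [Finset.sum_congr rfl (fun yb _ => hdiag yb), Finset.sum_sub_distrib,
            ← Finset.mul_sum, hprob, mul_one]
        rw [e1, e2, e3]
        ring
    _ = c * (∑ yb : Fin K, ∫ x,
            (∑ y' ∈ Finset.univ.filter (fun y' => y' ≠ yb), ℓ (g y' x - g yb x)) *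
              ((1 / c) * ∑ y ∈ Finset.univ.filter (fun y => y ≠ yb), p x y) ∂ν)
        - (K:ℝ) * c / 2 + c := by
        rw [Finset.sum_congr rfl (fun yb _ => (hrhs yb).symm)]
end

section
/- Let (x_1,ȳ_1),…,(x_n,ȳ_n) be i.i.d. samples from p̄, and let L̄ satisfy the two symmetry conditions of Theorem 1 with constants M₁, M₂. Then the empirical estimator R̂(f) = (K−1)/n · Σ_{i=1}^n L̄(f(x_i), ȳ_i) − M₁ + M₂ is an unbiased estimator of the classification risk R(f) = E_{p(x,y)}[L(f(x),y)], i.e., E[R̂(f)] = R(f). -/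
open MeasureTheory Finset ENNReal

section Aux

variable {X : Type*} [MeasurableSpace X]

/-- bounded measurable functions are integrable w.r.t. a finite measure -/
lemma integrable_bdd {α : Type*} [MeasurableSpace α] (μ : Measure α) [IsFiniteMeasure μ]
    {g : α → ℝ} (hg : Measurable g) {C : ℝ} (hC : ∀ a, |g a| ≤ C) : Integrable g μ :=
  (integrable_const C).mono' hg.aestronglyMeasurable
    (Filter.Eventually.of_forall fun a => by simpa [Real.norm_eq_abs] using hC a)

/-- marginal of a product of probability measures -/
lemma pi_map_eval {ι : Type*} [Fintype ι] [DecidableEq ι] {α : ι → Type*} [∀ i, MeasurableSpace (α i)]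
    (μ : ∀ i, Measure (α i)) [∀ i, IsProbabilityMeasure (μ i)] (i : ι) :
    (Measure.pi μ).map (Function.eval i) = μ i := by
  ext s hs
  rw [Measure.map_apply (measurable_pi_apply i) hs, ← Set.univ_pi_update_univ, Measure.pi_pi]
  rw [Finset.prod_eq_single_of_mem i (Finset.mem_univ i)
    (fun j _ hj => by simp [Function.update_of_ne hj])]
  simp

noncomputable def ySlice {K : ℕ} (μ : Measure (X × Fin K)) (y : Fin K) : Measure X :=
  (μ.restrict (Set.univ ×ˢ ({y} : Set (Fin K)))).map Prod.fst

lemma ySlice_apply {K : ℕ} (μ : Measure (X × Fin K)) (y : Fin K) {s : Set X}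
    (hs : MeasurableSet s) : ySlice μ y s = μ (s ×ˢ ({y} : Set (Fin K))) := by
  rw [ySlice, Measure.map_apply measurable_fst hs,
    Measure.restrict_apply (measurable_fst hs)]
  congr 1
  ext ⟨a, b⟩
  simp only [Set.mem_inter_iff, Set.mem_preimage, Set.mem_prod, Set.mem_univ, true_and,
    Set.mem_singleton_iff]

instance slice_finite {K : ℕ} (μ : Measure (X × Fin K)) [IsFiniteMeasure μ] (y : Fin K) :
    IsFiniteMeasure (ySlice μ y) := by
  unfold ySlice; infer_instance

lemma measure_eq_sum_slices {K : ℕ} (μ : Measure (X × Fin K)) (s : Set (X × Fin K))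
    (hs : MeasurableSet s) :
    μ s = ∑ y : Fin K, ((ySlice μ y).map (fun x => (x, y))) s := by
  have : ∀ y : Fin K, ((ySlice μ y).map (fun x => (x, y))) s = μ (s ∩ Set.univ ×ˢ {y}) := by
    intro y
    rw [Measure.map_apply measurable_prodMk_right hs,
      ySlice_apply μ y (measurable_prodMk_right hs)]
    congr 1
    ext ⟨a, b⟩
    simp only [Set.mem_prod, Set.mem_preimage, Set.mem_inter_iff, Set.mem_univ, true_and,
      Set.mem_singleton_iff]
    constructor
    · rintro ⟨h1, rfl⟩; exact ⟨h1, rfl⟩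
    · rintro ⟨h1, rfl⟩; exact ⟨h1, rfl⟩
  simp only [this]
  rw [← measure_biUnion_finset (s := Finset.univ) (f := fun y => s ∩ Set.univ ×ˢ {y})]
  · congr 1
    ext q
    simp
  · intro a _ b _ hab
    simp only [Function.onFun, Set.disjoint_left]
    rintro q ⟨_, _, hq⟩ ⟨_, _, hq'⟩
    exact hab (hq.symm.trans hq')
  · exact fun y _ => hs.inter (MeasurableSet.univ.prod (measurableSet_singleton y))

lemma measure_decomp {K : ℕ} (μ : Measure (X × Fin K)) :
    μ = ∑ y : Fin K, ((ySlice μ y).map (fun x => (x, y))) := by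
  ext s hs
  rw [measure_eq_sum_slices μ s hs, Measure.finset_sum_apply]

lemma integral_eq_sum_slices {K : ℕ} (μ : Measure (X × Fin K)) [IsFiniteMeasure μ]
    {g : X × Fin K → ℝ} (hg : Measurable g) {C : ℝ} (hC : ∀ q, |g q| ≤ C) :
    ∫ q, g q ∂μ = ∑ y : Fin K, ∫ x, g (x, y) ∂(ySlice μ y) := by
  have hint : ∀ y ∈ (Finset.univ : Finset (Fin K)),
      Integrable g ((ySlice μ y).map (fun x => (x, y))) := fun y _ =>
    integrable_bdd _ hg hC
  conv_lhs => rw [measure_decomp μ]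
  rw [integral_finset_sum_measure hint]
  refine Finset.sum_congr rfl fun y _ => ?_
  rw [integral_map measurable_prodMk_right.aemeasurable hg.aestronglyMeasurable]

end Aux

/-- The empirical estimator `R̂(f) = (K−1)/n · Σ_i L̄(f(x_i),ȳ_i) − M₁ + M₂` built from an
i.i.d. sample from the complementary distribution `P̄` is an unbiased estimator of the
classification risk `R(f) = E_P[L(f(x),y)]`. -/
theorem unbiased_empirical_complementary_risk
    {X Y : Type*} [MeasurableSpace X]
    (K : ℕ) (hK : 2 ≤ K) (n : ℕ) (hn : 0 < n)
    (P Pbar : Measure (X × Fin K)) [IsProbabilityMeasure P] [IsProbabilityMeasure Pbar]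
    (hPbar : ∀ (s : Set X), MeasurableSet s → ∀ yb : Fin K,
      Pbar (s ×ˢ ({yb} : Set (Fin K))) =
        (1 / ((K : ℝ≥0∞) - 1)) *
          ∑ y ∈ Finset.univ.filter (fun y => y ≠ yb), P (s ×ˢ ({y} : Set (Fin K))))
    (f : X → Y) (L Lbar : Y → Fin K → ℝ) (M₁ M₂ : ℝ)
    (hmeasL : Measurable fun q : X × Fin K => L (f q.1) q.2)
    (hmeasLbar : Measurable fun q : X × Fin K => Lbar (f q.1) q.2)
    (hbddL : ∃ C : ℝ, ∀ q : X × Fin K, |L (f q.1) q.2| ≤ C)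
    (hbddLbar : ∃ C : ℝ, ∀ q : X × Fin K, |Lbar (f q.1) q.2| ≤ C)
    (hM₁ : ∀ x : X, ∑ yb : Fin K, Lbar (f x) yb = M₁)
    (hM₂ : ∀ (x : X) (y : Fin K), Lbar (f x) y + L (f x) y = M₂) :
    ∫ ω : Fin n → X × Fin K,
        (((K : ℝ) - 1) / n * ∑ i : Fin n, Lbar (f (ω i).1) (ω i).2 - M₁ + M₂)
        ∂(Measure.pi fun _ : Fin n => Pbar)
      = ∫ q, L (f q.1) q.2 ∂P := by
  obtain ⟨C, hC⟩ := hbddLbar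
  obtain ⟨D, hD⟩ := hbddL
  set g : X × Fin K → ℝ := fun q => Lbar (f q.1) q.2 with hgdef
  set h : X × Fin K → ℝ := fun q => L (f q.1) q.2 with hhdef
  have hK1 : (1 : ℝ≥0∞) ≤ (K : ℝ≥0∞) := by
    exact_mod_cast (le_trans one_le_two hK : 1 ≤ K)
  have hKR : (2 : ℝ) ≤ (K : ℝ) := by exact_mod_cast hK
  have hKne : ((K : ℝ) - 1) ≠ 0 := by linarith
  -- toReal computation
  have ht : ((((K : ℝ≥0∞) - 1))⁻¹).toReal = ((K : ℝ) - 1)⁻¹ := by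
    rw [ENNReal.toReal_inv, ENNReal.toReal_sub_of_le hK1 (by simp)]
    simp
  -- slice relation
  have hslice : ∀ yb : Fin K, ySlice Pbar yb =
      (((K : ℝ≥0∞) - 1))⁻¹ • ∑ y ∈ Finset.univ.erase yb, ySlice P y := by
    intro yb
    ext s hs
    rw [ySlice_apply _ _ hs, hPbar s hs yb, Measure.smul_apply,
      Measure.finset_sum_apply, one_div, smul_eq_mul]
    congr 1
    rw [← Finset.filter_ne']
    exact Finset.sum_congr rfl fun y _ => (ySlice_apply P y hs).symm
  -- key identity
  have key : ((K : ℝ) - 1) * ∫ q, g q ∂Pbar = M₁ - ∫ q, g q ∂P := by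
    rw [integral_eq_sum_slices Pbar hmeasLbar hC]
    have step : ∀ yb : Fin K, ∫ x, g (x, yb) ∂(ySlice Pbar yb) =
        ((K : ℝ) - 1)⁻¹ * ∑ y ∈ Finset.univ.erase yb, ∫ x, g (x, yb) ∂(ySlice P y) := by
      intro yb
      rw [hslice yb, integral_smul_measure,
        integral_finset_sum_measure (fun y _ =>
          integrable_bdd (g := fun x => g (x, yb)) _ (hmeasLbar.comp measurable_prodMk_right)
            (fun x => hC (x, yb))),
        ht, smul_eq_mul]
    simp only [step]
    rw [Finset.mul_sum]
    simp only [← mul_assoc, mul_inv_cancel₀ hKne, one_mul]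
    rw [Finset.sum_comm' (t' := Finset.univ) (s' := fun y => Finset.univ.erase y)
      (by intro x y; simp only [Finset.mem_erase, Finset.mem_univ, true_and, and_true]
          exact ⟨fun h' => h'.symm, fun h' => h'.symm⟩)]
    have inner : ∀ y : Fin K, ∑ yb ∈ Finset.univ.erase y, ∫ x, g (x, yb) ∂(ySlice P y) =
        M₁ * ((ySlice P y) Set.univ).toReal - ∫ x, g (x, y) ∂(ySlice P y) := by
      intro y
      rw [← integral_finset_sum _ (fun yb _ =>
        integrable_bdd (g := fun x => g (x, yb)) _ (hmeasLbar.comp measurable_prodMk_right)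
          (fun x => hC (x, yb)))]
      have : ∀ x : X, ∑ yb ∈ Finset.univ.erase y, g (x, yb) = M₁ - g (x, y) := by
        intro x
        rw [Finset.sum_erase_eq_sub (Finset.mem_univ y)]
        simp [hgdef, hM₁ x]
      simp only [this]
      rw [integral_sub (integrable_const M₁)
        (integrable_bdd (g := fun x => g (x, y)) _ (hmeasLbar.comp measurable_prodMk_right)
          (fun x => hC (x, y))),
        integral_const, smul_eq_mul, mul_comm, measureReal_def]
    simp only [inner]
    rw [Finset.sum_sub_distrib, ← Finset.mul_sum, ← integral_eq_sum_slices P hmeasLbar hC]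
    have hsum1 : ∑ y : Fin K, ((ySlice P y) Set.univ).toReal = 1 := by
      rw [← ENNReal.toReal_sum (fun y _ => measure_ne_top _ _)]
      have : ∑ y : Fin K, (ySlice P y) Set.univ = P Set.univ := by
        rw [measure_eq_sum_slices P Set.univ MeasurableSet.univ]
        refine (Finset.sum_congr rfl fun y _ => ?_).symm
        rw [Measure.map_apply measurable_prodMk_right MeasurableSet.univ]
        simp
      rw [this]
      simp
    rw [hsum1, mul_one]
  -- ∫ g dP = M₂ - ∫ h dP
  have hgP : ∫ q, g q ∂P = M₂ - ∫ q, h q ∂P := by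
    have : ∀ q : X × Fin K, g q = M₂ - h q := fun q => by
      have := hM₂ q.1 q.2
      show Lbar (f q.1) q.2 = M₂ - L (f q.1) q.2
      linarith
    simp only [this]
    rw [integral_sub (integrable_const M₂) (integrable_bdd _ hmeasL hD), integral_const]
    simp
  -- coordinate integrals
  set π : Measure (Fin n → X × Fin K) := Measure.pi fun _ : Fin n => Pbar with hπ
  have hcoord : ∀ i : Fin n, ∫ ω, g (ω i) ∂π = ∫ q, g q ∂Pbar := by
    intro i
    rw [← pi_map_eval (fun _ : Fin n => Pbar) i,
      integral_map (measurable_pi_apply i).aemeasurable hmeasLbar.aestronglyMeasurable]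
  have hinti : ∀ i : Fin n, Integrable (fun ω : Fin n → X × Fin K => g (ω i)) π :=
    fun i => integrable_bdd _ (hmeasLbar.comp (measurable_pi_apply i)) (fun ω => hC (ω i))
  have hintS : Integrable (fun ω : Fin n → X × Fin K => ∑ i : Fin n, g (ω i)) π :=
    integrable_finset_sum _ (fun i _ => hinti i)
  rw [show (fun ω : Fin n → X × Fin K =>
      ((K : ℝ) - 1) / n * ∑ i : Fin n, Lbar (f (ω i).1) (ω i).2 - M₁ + M₂) =
      (fun ω : Fin n → X × Fin K =>
      ((K : ℝ) - 1) / n * ∑ i : Fin n, g (ω i) - M₁ + M₂) from rfl]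
  have hint2 : Integrable (fun ω : Fin n → X × Fin K =>
      ((K : ℝ) - 1) / n * ∑ i : Fin n, g (ω i)) π := hintS.const_mul _
  have hint1 : Integrable (fun ω : Fin n → X × Fin K =>
      ((K : ℝ) - 1) / n * ∑ i : Fin n, g (ω i) - M₁) π := hint2.sub (integrable_const M₁)
  rw [integral_add hint1 (integrable_const M₂),
    integral_sub hint2 (integrable_const M₁), integral_const_mul,
    integral_finset_sum _ (fun i _ => hinti i)]
  simp only [hcoord, integral_const, Finset.sum_const, Finset.card_univ, Fintype.card_fin,
    measureReal_def, measure_univ, ENNReal.toReal_one, smul_eq_mul, one_mul, nsmul_eq_mul]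
  have hnne : (n : ℝ) ≠ 0 := Nat.cast_ne_zero.mpr hn.ne'
  have : ((K : ℝ) - 1) / n * (n * ∫ q, g q ∂Pbar) = ((K : ℝ) - 1) * ∫ q, g q ∂Pbar := by
    field_simp
  rw [this]
  linarith [key, hgP]
end
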